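/- arXiv:2007.15369 — 2 statements merged into one kernel-verified Lean document; each statement's English description precedes it below -/
import Mathlib

section
/- Let k be a conditionally negative kernel on a set X (k symmetric, k(x,x)=0, and ∑_{x,y∈F} c_x c_y k(x,y) ≤ 0 for every finite F ⊆ X and reals (c_x) with ∑ c_x = 0). Then for every t ≥ 0 the kernel q_t(x,y) = exp(-t·k(x,y)) is positive definite, i.e. for every finite F ⊆ X and complex numbers (c_x), ∑_{x,y∈F} c_x·conj(c_y)·exp(-t·k(x,y)) ≥ 0. -/
open Finset Matrix Nat

theorem gram_pow_nonneg {X : Type*} (F : Finset X) {ι : Type*} [Fintype ι]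
    (w : X → ι → ℝ) (c : X → ℝ) (n : ℕ) :
    0 ≤ ∑ x ∈ F, ∑ y ∈ F, c x * c y * (∑ i, w x i * w y i) ^ n := by
  have h1 : ∀ x y : X, c x * c y * (∑ i, w x i * w y i) ^ n
      = ∑ f : Fin n → ι, (c x * ∏ j, w x (f j)) * (c y * ∏ j, w y (f j)) := by
    intro x y
    rw [Fintype.sum_pow, Finset.mul_sum]
    refine Finset.sum_congr rfl fun f _ => ?_
    rw [Finset.prod_mul_distrib]
    ring
  have h2 : ∑ f : Fin n → ι, (∑ x ∈ F, c x * ∏ j, w x (f j)) ^ 2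
      = ∑ x ∈ F, ∑ y ∈ F, c x * c y * (∑ i, w x i * w y i) ^ n := by
    simp_rw [h1, sq, Finset.sum_mul_sum]
    rw [Finset.sum_comm]
    exact Finset.sum_congr rfl fun _ _ => Finset.sum_comm
  rw [← h2]
  exact Finset.sum_nonneg fun f _ => sq_nonneg _

theorem gram_of_psd {X : Type*} (F : Finset X) (p : X → X → ℝ)
    (hpsymm : ∀ x y, p x y = p y x)
    (hp : ∀ c : X → ℝ, 0 ≤ ∑ x ∈ F, ∑ y ∈ F, c x * c y * p x y) :
    ∃ w : X → (↥F → ℝ), ∀ x ∈ F, ∀ y ∈ F, p x y = ∑ i, w x i * w y i := by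
  classical
  set M : Matrix ↥F ↥F ℝ := fun i j => p i j with hMdef
  have hM : M.PosSemidef := by
    rw [Matrix.posSemidef_iff_dotProduct_mulVec]
    constructor
    · ext i j
      rw [Matrix.conjTranspose_apply]
      simp [hMdef, hpsymm i.1 j.1]
    · intro v
      have key := hp (fun x => if h : x ∈ F then v ⟨x, h⟩ else 0)
      have e1 : ∑ x ∈ F, ∑ y ∈ F,
          (if h : x ∈ F then v ⟨x, h⟩ else 0) * (if h : y ∈ F then v ⟨y, h⟩ else 0) * p x y
          = ∑ i : ↥F, ∑ j : ↥F, v i * v j * p i j := by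
        rw [← Finset.sum_coe_sort F]
        refine Finset.sum_congr rfl fun i _ => ?_
        rw [← Finset.sum_coe_sort F]
        refine Finset.sum_congr rfl fun j _ => ?_
        rw [dif_pos i.2, dif_pos j.2]
      rw [e1] at key
      have e2 : dotProduct (star v) (M.mulVec v) = ∑ i : ↥F, ∑ j : ↥F, v i * v j * p i j := by
        simp only [dotProduct, Matrix.mulVec, star_trivial, Finset.mul_sum, hMdef]
        exact Finset.sum_congr rfl fun i _ => Finset.sum_congr rfl fun j _ => by ring
      rw [e2]
      exact key
  obtain ⟨B, hB⟩ := by open scoped MatrixOrder in exact CStarAlgebra.nonneg_iff_eq_star_mul_self.mp hM.nonneg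
  refine ⟨fun x l => if h : x ∈ F then B l ⟨x, h⟩ else 0, fun x hx y hy => ?_⟩
  have : p x y = M ⟨x, hx⟩ ⟨y, hy⟩ := rfl
  rw [this, hB]
  simp [Matrix.star_eq_conjTranspose, Matrix.mul_apply, Matrix.conjTranspose_apply, dif_pos hx, dif_pos hy]

theorem p_psd {X : Type*} (k : X → X → ℝ)
    (hsymm : ∀ x y, k x y = k y x) (hdiag : ∀ x, k x x = 0)
    (hcn : ∀ (F : Finset X) (c : X → ℝ), (∑ x ∈ F, c x) = 0 →
      (∑ x ∈ F, ∑ y ∈ F, c x * c y * k x y) ≤ 0)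
    (F : Finset X) (x0 : X) (hx0 : x0 ∈ F) (c : X → ℝ) :
    0 ≤ ∑ x ∈ F, ∑ y ∈ F, c x * c y * (k x x0 + k y x0 - k x y) := by
  classical
  set S := ∑ x ∈ F, c x with hS
  set T := ∑ x ∈ F, c x * k x x0 with hT
  set U : X → ℝ := fun x => ∑ y ∈ F, c y * k x y with hU
  set A := ∑ x ∈ F, ∑ y ∈ F, c x * c y * k x y with hA
  have hUx0 : U x0 = T := by
    simp only [hU, hT]
    exact Finset.sum_congr rfl fun y _ => by rw [hsymm x0 y]
  have hAU : ∑ x ∈ F, c x * U x = A := by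
    simp only [hU, hA, Finset.mul_sum]
    exact Finset.sum_congr rfl fun x _ => Finset.sum_congr rfl fun y _ => by ring
  set c' : X → ℝ := fun x => c x - if x = x0 then S else 0 with hc'
  have h1 : ∀ g : X → ℝ, ∑ x ∈ F, (if x = x0 then S else 0) * g x = S * g x0 := by
    intro g
    rw [Finset.sum_congr rfl fun x _ =>
      (show (if x = x0 then S else 0) * g x = if x = x0 then S * g x else 0 by
        split_ifs <;> ring)]
    rw [Finset.sum_ite_eq' F x0 (fun x => S * g x), if_pos hx0]
  have hS' : ∑ x ∈ F, c' x = 0 := by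
    simp only [hc', Finset.sum_sub_distrib]
    rw [Finset.sum_ite_eq' F x0 (fun _ => S), if_pos hx0]
    exact sub_self S
  have inner : ∀ x : X, ∑ y ∈ F, c' x * c' y * k x y = c' x * U x - S * (c' x * k x x0) := by
    intro x
    rw [Finset.sum_congr rfl fun y _ =>
      (show c' x * c' y * k x y
          = c' x * (c y * k x y) - (if y = x0 then S else 0) * (c' x * k x y) by
        simp only [hc']; ring)]
    rw [Finset.sum_sub_distrib, ← Finset.mul_sum, h1 (fun y => c' x * k x y)]
  have expand : ∑ x ∈ F, ∑ y ∈ F, c' x * c' y * k x y = A - 2 * (S * T) := by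
    rw [Finset.sum_congr rfl fun x _ => inner x, Finset.sum_sub_distrib]
    have e1 : ∑ x ∈ F, c' x * U x = A - S * T := by
      rw [Finset.sum_congr rfl fun x _ =>
        (show c' x * U x = c x * U x - (if x = x0 then S else 0) * U x by
          simp only [hc']; ring)]
      rw [Finset.sum_sub_distrib, h1 U, hAU, hUx0]
    have e2 : ∑ x ∈ F, S * (c' x * k x x0) = S * T := by
      rw [Finset.sum_congr rfl fun x _ =>
        (show S * (c' x * k x x0)
            = S * (c x * k x x0) - S * ((if x = x0 then S else 0) * k x x0) by
          simp only [hc']; ring)]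
      rw [Finset.sum_sub_distrib, ← Finset.mul_sum, ← Finset.mul_sum,
        h1 (fun x => k x x0), hdiag x0]
      simp [hT]
    rw [e1, e2]; ring
  have hneg := hcn F c' hS'
  rw [expand] at hneg
  have target : ∑ x ∈ F, ∑ y ∈ F, c x * c y * (k x x0 + k y x0 - k x y)
      = 2 * (S * T) - A := by
    have inner2 : ∀ x : X, ∑ y ∈ F, c x * c y * (k x x0 + k y x0 - k x y)
        = c x * k x x0 * S + c x * T - c x * U x := by
      intro x
      rw [Finset.sum_congr rfl fun y _ =>
        (show c x * c y * (k x x0 + k y x0 - k x y)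
            = c x * k x x0 * c y + c x * (c y * k y x0) - c x * (c y * k x y) by ring)]
      rw [Finset.sum_sub_distrib, Finset.sum_add_distrib, ← Finset.mul_sum,
        ← Finset.mul_sum, ← Finset.mul_sum]
    rw [Finset.sum_congr rfl fun x _ => inner2 x, Finset.sum_sub_distrib,
      Finset.sum_add_distrib, ← Finset.sum_mul, ← Finset.sum_mul, hAU]
    simp only [← hT, ← hS]
    ring
  rw [target]
  linarith

theorem real_schoenberg {X : Type*} (k : X → X → ℝ)
    (hsymm : ∀ x y, k x y = k y x) (hdiag : ∀ x, k x x = 0)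
    (hcn : ∀ (F : Finset X) (c : X → ℝ), (∑ x ∈ F, c x) = 0 →
      (∑ x ∈ F, ∑ y ∈ F, c x * c y * k x y) ≤ 0)
    (t : ℝ) (ht : 0 ≤ t) (F : Finset X) (c : X → ℝ) :
    0 ≤ ∑ x ∈ F, ∑ y ∈ F, c x * c y * Real.exp (-(t * k x y)) := by
  rcases F.eq_empty_or_nonempty with rfl | ⟨x0, hx0⟩
  · simp
  set p : X → X → ℝ := fun x y => k x x0 + k y x0 - k x y with hp
  have hpsymm : ∀ x y, p x y = p y x := fun x y => by
    simp only [hp]; rw [hsymm x y]; ring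
  obtain ⟨w, hw⟩ := gram_of_psd F p hpsymm
    (fun c => p_psd k hsymm hdiag hcn F x0 hx0 c)
  set d : X → ℝ := fun x => c x * Real.exp (-(t * k x x0)) with hd
  have key : ∀ x ∈ F, ∀ y ∈ F, c x * c y * Real.exp (-(t * k x y))
      = d x * d y * Real.exp (t * p x y) := by
    intro x hx y hy
    have e : Real.exp (-(t * k x x0)) * Real.exp (-(t * k y x0)) * Real.exp (t * p x y)
        = Real.exp (-(t * k x y)) := by
      rw [← Real.exp_add, ← Real.exp_add]
      congr 1
      simp only [hp]; ring
    calc c x * c y * Real.exp (-(t * k x y))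
        = c x * c y * (Real.exp (-(t * k x x0)) * Real.exp (-(t * k y x0))
            * Real.exp (t * p x y)) := by rw [e]
      _ = d x * d y * Real.exp (t * p x y) := by simp only [hd]; ring
  rw [Finset.sum_congr rfl fun x hx => Finset.sum_congr rfl fun y hy => key x hx y hy,
    ← Finset.sum_product']
  have hexp : ∀ (z : X × X), d z.1 * d z.2 * Real.exp (t * p z.1 z.2)
      = ∑' n : ℕ, d z.1 * d z.2 * ((t * p z.1 z.2) ^ n / n !) := by
    intro z
    rw [Real.exp_eq_exp_ℝ, NormedSpace.exp_eq_tsum_div, tsum_mul_left]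
  rw [Finset.sum_congr rfl fun z _ => hexp z,
    ← Summable.tsum_finsetSum (fun z _ => (Real.summable_pow_div_factorial _).mul_left _)]
  refine tsum_nonneg fun n => ?_
  rw [Finset.sum_product]
  have e2 : ∀ x ∈ F, ∀ y ∈ F, d x * d y * ((t * p x y) ^ n / n !)
      = (t ^ n / n !) * (d x * d y * (∑ i, w x i * w y i) ^ n) := by
    intro x hx y hy
    rw [← hw x hx y hy, mul_pow]
    ring
  rw [Finset.sum_congr rfl fun x hx => Finset.sum_congr rfl fun y hy => e2 x hx y hy]
  simp only [← Finset.mul_sum]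
  exact mul_nonneg (div_nonneg (pow_nonneg ht n) (Nat.cast_nonneg _))
    (gram_pow_nonneg F w d n)

open ComplexOrder in
theorem schoenberg_positive_definite {X : Type*} (k : X → X → ℝ)
    (hsymm : ∀ x y, k x y = k y x) (hdiag : ∀ x, k x x = 0)
    (hcn : ∀ (F : Finset X) (c : X → ℝ), (∑ x ∈ F, c x) = 0 →
      (∑ x ∈ F, ∑ y ∈ F, c x * c y * k x y) ≤ 0)
    (t : ℝ) (ht : 0 ≤ t) (F : Finset X) (c : X → ℂ) :
    0 ≤ ∑ x ∈ F, ∑ y ∈ F, c x * (starRingEnd ℂ) (c y) * Complex.exp (-(t * k x y)) := by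
  set a : X → ℝ := fun x => (c x).re with ha
  set b : X → ℝ := fun x => (c x).im with hb
  set q : X → X → ℝ := fun x y => Real.exp (-(t * k x y)) with hq
  have hqsymm : ∀ x y, q x y = q y x := fun x y => by simp only [hq, hsymm x y]
  have hterm : ∀ x y : X, c x * (starRingEnd ℂ) (c y) * Complex.exp (-(t * k x y))
      = ((((a x * a y + b x * b y) * q x y : ℝ)) : ℂ)
        + Complex.I * (((b x * a y - a x * b y) * q x y : ℝ) : ℂ) := by
    intro x y
    have hc : Complex.exp (-((t : ℂ) * (k x y : ℂ))) = ((q x y : ℝ) : ℂ) := by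
      rw [show (-((t : ℂ) * (k x y : ℂ))) = ((-(t * k x y) : ℝ) : ℂ) by push_cast; ring,
        ← Complex.ofReal_exp]
    rw [hc]
    apply Complex.ext <;>
      simp only [Complex.add_re, Complex.add_im, Complex.mul_re, Complex.mul_im,
        Complex.ofReal_re, Complex.ofReal_im, Complex.I_re, Complex.I_im,
        Complex.conj_re, Complex.conj_im, ha, hb] <;> ring
  rw [Finset.sum_congr rfl fun x _ => Finset.sum_congr rfl fun y _ => hterm x y]
  simp only [Finset.sum_add_distrib, ← Complex.ofReal_sum, ← Finset.mul_sum]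
  have hIm : ∑ x ∈ F, ∑ y ∈ F, (b x * a y - a x * b y) * q x y = 0 := by
    have h2 : ∑ x ∈ F, ∑ y ∈ F, (b x * a y - a x * b y) * q x y
        = - ∑ x ∈ F, ∑ y ∈ F, (b x * a y - a x * b y) * q x y := by
      calc ∑ x ∈ F, ∑ y ∈ F, (b x * a y - a x * b y) * q x y
          = ∑ y ∈ F, ∑ x ∈ F, (b x * a y - a x * b y) * q x y := Finset.sum_comm
        _ = ∑ y ∈ F, ∑ x ∈ F, -((b y * a x - a y * b x) * q y x) := by
            refine Finset.sum_congr rfl fun y _ => Finset.sum_congr rfl fun x _ => ?_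
            rw [hqsymm y x]; ring
        _ = - ∑ x ∈ F, ∑ y ∈ F, (b x * a y - a x * b y) * q x y := by
            simp [Finset.sum_neg_distrib]
    linarith
  rw [hIm]
  simp only [Complex.ofReal_zero, mul_zero, add_zero]
  rw [Complex.zero_le_real]
  have := real_schoenberg k hsymm hdiag hcn t ht F a
  have := real_schoenberg k hsymm hdiag hcn t ht F b
  have hsplit : ∑ x ∈ F, ∑ y ∈ F, (a x * a y + b x * b y) * q x y
      = (∑ x ∈ F, ∑ y ∈ F, a x * a y * q x y) + ∑ x ∈ F, ∑ y ∈ F, b x * b y * q x y := by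
    rw [← Finset.sum_add_distrib]
    refine Finset.sum_congr rfl fun x _ => ?_
    rw [← Finset.sum_add_distrib]
    exact Finset.sum_congr rfl fun y _ => by ring
  rw [hsplit]
  positivity
end

section
/- Let (Z, dist, μ) with μ a probability measure and δ > 0 such that c·e^{-δu} ≤ μ(B(ξ,e^{-u})) ≤ C·e^{-δu} for all ξ in the support of μ and u ≥ u₀ (two-sided Ahlfors bound). Then for 1/2 < s ≤ 1 there are constants 0 < c' ≤ C' depending only on c, C, δ, s, u₀ such that c'/(2s-1) ≤ ∫_Z dist(ξ,η)^{-2(1-s)δ} dμ(η) ≤ C'/(2s-1) for all ξ in the support of μ. -/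
open MeasureTheory Metric Set Filter Real

set_option maxHeartbeats 1000000

theorem Is_one_two_sided_estimate {Z : Type*} [MetricSpace Z]
    [MeasurableSpace Z] [BorelSpace Z]
    (μ : Measure Z) [IsProbabilityMeasure μ] (δ c C u₀ : ℝ)
    (hδ : 0 < δ) (hc : 0 < c) (hcC : c ≤ C) (hu₀ : 0 ≤ u₀)
    (S : Set Z)
    (hlower : ∀ ξ ∈ S, ∀ u : ℝ, u₀ ≤ u →
      ENNReal.ofReal (c * Real.exp (-δ * u)) ≤ μ (closedBall ξ (Real.exp (-u))))
    (hupper : ∀ ξ ∈ S, ∀ u : ℝ, u₀ ≤ u →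
      μ (closedBall ξ (Real.exp (-u))) ≤ ENNReal.ofReal (C * Real.exp (-δ * u))) :
    ∀ s : ℝ, 1/2 < s → s ≤ 1 →
      ∃ c' C' : ℝ, 0 < c' ∧ c' ≤ C' ∧ ∀ ξ ∈ S,
        ENNReal.ofReal (c' / (2*s - 1))
          ≤ ∫⁻ η, ENNReal.ofReal ((dist ξ η) ^ (-(2*(1-s)*δ))) ∂μ ∧
        ∫⁻ η, ENNReal.ofReal ((dist ξ η) ^ (-(2*(1-s)*δ))) ∂μ
          ≤ ENNReal.ofReal (C' / (2*s - 1)) := by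
  intro s hs2 hs1
  have h2s : 0 < 2*s - 1 := by linarith
  have hC : 0 < C := lt_of_lt_of_le hc hcC
  by_cases hseq : s = 1
  · subst hseq
    refine ⟨1, 1, one_pos, le_rfl, fun ξ hξ => ?_⟩
    have hint : ∀ η : Z, ENNReal.ofReal ((dist ξ η) ^ (-(2*(1-1)*δ))) = 1 := by
      intro η
      norm_num
    simp only [hint, lintegral_one, measure_univ]
    norm_num
  -- main case s < 1
  have hslt : s < 1 := lt_of_le_of_ne hs1 hseq
  set α : ℝ := 2*(1-s)*δ with hαdef
  have hα0 : 0 < α := by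
    have : 0 < 1 - s := by linarith
    positivity
  have hαδ : α < δ := by nlinarith [mul_pos hδ h2s]
  set p : ℝ := δ / α with hpdef
  have hp : 1 < p := (one_lt_div hα0).2 hαδ
  set T : ℝ := Real.exp (α * u₀) with hTdef
  have hT0 : 0 < T := Real.exp_pos _
  set I : ℝ := ∫ t in Ioi T, t ^ (-p) with hIdef
  have hI0 : 0 ≤ I := by
    apply setIntegral_nonneg measurableSet_Ioi
    intro t ht
    exact Real.rpow_nonneg (le_of_lt (lt_trans hT0 ht)) _
  refine ⟨(2*s-1) * (c * Real.exp (-δ*u₀)),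
    max ((2*s-1) * (c * Real.exp (-δ*u₀))) ((2*s-1) * (T + C * I)), by positivity,
    le_max_left _ _, fun ξ hξ => ?_⟩
  -- point masses vanish
  have hpt : μ {ξ} = 0 := by
    have key : ∀ u : ℝ, u₀ ≤ u → μ {ξ} ≤ ENNReal.ofReal (C * Real.exp (-δ*u)) := by
      intro u hu
      refine le_trans (measure_mono ?_) (hupper ξ hξ u hu)
      intro x hx
      rw [Set.mem_singleton_iff] at hx
      subst hx
      simp [Real.exp_pos, le_of_lt (Real.exp_pos (-u))]
    have htend : Tendsto (fun u : ℝ => ENNReal.ofReal (C * Real.exp (-δ*u))) atTop (nhds 0) := by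
      rw [← ENNReal.ofReal_zero]
      apply ENNReal.tendsto_ofReal
      have h0 : Tendsto (fun u : ℝ => δ * u) atTop atTop :=
        tendsto_id.const_mul_atTop hδ
      have h1 : Tendsto (fun u : ℝ => -δ*u) atTop atBot := by
        have h1' := tendsto_neg_atBot_iff.2 h0
        simp only [neg_mul] at h1' ⊢
        exact h1'
      have := (Real.tendsto_exp_atBot.comp h1).const_mul C
      simpa using this
    exact le_antisymm (ge_of_tendsto htend (eventually_atTop.2 ⟨u₀, key⟩)) zero_le
  constructor
  · -- lower bound
    rw [mul_div_cancel_left₀ _ h2s.ne']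
    calc ENNReal.ofReal (c * Real.exp (-δ*u₀))
        ≤ μ (closedBall ξ (Real.exp (-u₀))) := hlower ξ hξ u₀ le_rfl
      _ = μ (closedBall ξ (Real.exp (-u₀)) \ {ξ}) := (measure_diff_null hpt).symm
      _ = ∫⁻ _η in closedBall ξ (Real.exp (-u₀)) \ {ξ}, 1 ∂μ := (setLIntegral_one _).symm
      _ ≤ ∫⁻ η in closedBall ξ (Real.exp (-u₀)) \ {ξ},
            ENNReal.ofReal ((dist ξ η) ^ (-α)) ∂μ := by
          apply setLIntegral_mono' (measurableSet_closedBall.diff (measurableSet_singleton _))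
          intro η hη
          have hne : η ≠ ξ := by simpa using hη.2
          have hd0 : 0 < dist ξ η := by rw [dist_comm]; exact dist_pos.2 hne
          have hd1 : dist ξ η ≤ 1 := by
            have := mem_closedBall.1 hη.1
            rw [dist_comm]
            calc dist η ξ ≤ Real.exp (-u₀) := this
              _ ≤ 1 := Real.exp_le_one_iff.2 (by linarith)
          have h1 : (1:ℝ) ≤ (dist ξ η) ^ (-α) :=
            Real.one_le_rpow_of_pos_of_le_one_of_nonpos hd0 hd1 (by linarith)
          simpa using ENNReal.one_le_ofReal.2 h1
      _ ≤ ∫⁻ η, ENNReal.ofReal ((dist ξ η) ^ (-α)) ∂μ := setLIntegral_le_lintegral _ _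
  · -- upper bound
    have hfm : Measurable fun η => (dist ξ η) ^ (-α) := by
      have hd : Measurable fun η : Z => dist ξ η := (continuous_const.dist continuous_id).measurable
      have heq : (fun η : Z => (dist ξ η) ^ (-α)) =
          fun η => if dist ξ η = 0 then 0 else Real.exp (Real.log (dist ξ η) * (-α)) := by
        funext η
        by_cases h : dist ξ η = 0
        · simp [h, Real.zero_rpow (neg_ne_zero.2 hα0.ne')]
        · have hpos : 0 < dist ξ η := lt_of_le_of_ne dist_nonneg (Ne.symm h)
          simp [h, Real.rpow_def_of_pos hpos]
      rw [heq]
      exact Measurable.ite (hd (measurableSet_singleton 0)) measurable_const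
        ((Real.measurable_log.comp hd).mul measurable_const).exp
    rw [lintegral_eq_lintegral_meas_lt μ
      (Eventually.of_forall fun η => Real.rpow_nonneg dist_nonneg _) hfm.aemeasurable]
    have hsplit : Ioi (0:ℝ) = Ioc 0 T ∪ Ioi T := (Ioc_union_Ioi_eq_Ioi hT0.le).symm
    rw [hsplit, lintegral_union measurableSet_Ioi (Ioc_disjoint_Ioi le_rfl)]
    have h1 : ∫⁻ t in Ioc (0:ℝ) T, μ {a | t < (dist ξ a) ^ (-α)} ≤ ENNReal.ofReal T := by
      calc ∫⁻ t in Ioc (0:ℝ) T, μ {a | t < (dist ξ a) ^ (-α)}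
          ≤ ∫⁻ _t in Ioc (0:ℝ) T, 1 :=
            setLIntegral_mono' measurableSet_Ioc (fun t _ => prob_le_one)
        _ = volume (Ioc (0:ℝ) T) := setLIntegral_one _
        _ = ENNReal.ofReal T := by rw [Real.volume_Ioc, sub_zero]
    have h2 : ∫⁻ t in Ioi T, μ {a | t < (dist ξ a) ^ (-α)} ≤ ENNReal.ofReal (C * I) := by
      have key : ∀ t ∈ Ioi T, μ {a | t < (dist ξ a) ^ (-α)}
          ≤ ENNReal.ofReal (C * t ^ (-p)) := by
        intro t ht
        have htT : T < t := ht
        have ht0 : 0 < t := lt_trans hT0 htT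
        set u : ℝ := Real.log t / α with hudef
        have hu₀u : u₀ ≤ u := by
          rw [hudef, le_div_iff₀ hα0]
          have h3 : α * u₀ < Real.log t := by
            have := Real.log_lt_log hT0 htT
            rwa [hTdef, Real.log_exp] at this
          linarith
        have hsub : {a | t < (dist ξ a) ^ (-α)} ⊆ closedBall ξ (Real.exp (-u)) := by
          intro a ha
          simp only [mem_setOf_eq] at ha
          have hd0 : 0 < dist ξ a := by
            rcases (dist_nonneg : (0:ℝ) ≤ dist ξ a).eq_or_lt with h | h
            · exfalso
              rw [← h, Real.zero_rpow (neg_ne_zero.2 hα0.ne')] at ha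
              exact absurd ha (not_lt.2 ht0.le)
            · exact h
          have hlt : dist ξ a < Real.exp (-u) := by
            have h4 := Real.rpow_lt_rpow_of_neg ht0 ha
              (neg_lt_zero.2 (by positivity : (0:ℝ) < 1/α))
            have h5 : ((dist ξ a) ^ (-α)) ^ (-(1/α)) = dist ξ a := by
              rw [← Real.rpow_mul hd0.le]
              have : (-α) * (-(1/α)) = 1 := by field_simp
              rw [this, Real.rpow_one]
            have h6 : t ^ (-(1/α)) = Real.exp (-u) := by
              rw [Real.rpow_def_of_pos ht0, hudef]
              congr 1
              ring
            rw [h5, h6] at h4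
            exact h4
          exact mem_closedBall.2 (by rw [dist_comm] at hlt; exact hlt.le)
        have hμ := le_trans (measure_mono hsub) (hupper ξ hξ u hu₀u)
        have heq : C * Real.exp (-δ*u) = C * t ^ (-p) := by
          congr 1
          rw [Real.rpow_def_of_pos ht0, hudef, hpdef]
          congr 1
          ring
        rwa [heq] at hμ
      have hintg : IntegrableOn (fun t => C * t ^ (-p)) (Ioi T) :=
        (integrableOn_Ioi_rpow_of_lt (by linarith) hT0).const_mul C
      calc ∫⁻ t in Ioi T, μ {a | t < (dist ξ a) ^ (-α)}
          ≤ ∫⁻ t in Ioi T, ENNReal.ofReal (C * t ^ (-p)) :=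
            setLIntegral_mono' measurableSet_Ioi key
        _ = ENNReal.ofReal (∫ t in Ioi T, C * t ^ (-p)) := by
            rw [← ofReal_integral_eq_lintegral_ofReal hintg]
            exact (ae_restrict_of_forall_mem measurableSet_Ioi fun t ht =>
              mul_nonneg hC.le (Real.rpow_nonneg (lt_trans hT0 ht).le _))
        _ = ENNReal.ofReal (C * I) := by rw [integral_const_mul]
    calc _ ≤ ENNReal.ofReal T + ENNReal.ofReal (C * I) := add_le_add h1 h2
      _ = ENNReal.ofReal (T + C * I) := (ENNReal.ofReal_add hT0.le (by positivity)).symm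
      _ ≤ ENNReal.ofReal (max ((2*s-1) * (c * Real.exp (-δ*u₀))) ((2*s-1) * (T + C * I)) / (2*s-1)) := by
          apply ENNReal.ofReal_le_ofReal
          rw [le_div_iff₀ h2s]
          calc (T + C * I) * (2*s-1) = (2*s-1) * (T + C * I) := by ring
            _ ≤ max ((2*s-1) * (c * Real.exp (-δ*u₀))) ((2*s-1) * (T + C * I)) := le_max_right _ _
end
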